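/- On a Riemannian manifold, if a 1-form φ satisfies ∇φ = (1/2)((-1 + L)(φ⊗φ) - νg) where L is induced by a parallel almost hypercomplex structure, then the dual vector field ξ = φ^♯ satisfies ∇_ξ ξ = -(1/2)(|φ|² + ν)ξ. -/

import Mathlib

/-- pointwise form, the tangent space at a point being the inner product
space `V`: if the 1-form `φ` satisfies `∇φ = (1/2)((-1 + L)(φ⊗φ) - νg)`, then the dual
vector field `ξ = φ^♯` satisfies `∇_ξ ξ = -(1/2)(|φ|² + ν)ξ`.  Here `B = ∇φ`, so that
`∇_ξ ξ` is the vector `η` with `g(η, Y) = (∇_ξ φ)(Y) = B(ξ, Y)` for all `Y`. -/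
theorem nabla_xi_xi {V : Type*} [NormedAddCommGroup V] [InnerProductSpace ℝ V]
    (I J K : V →ₗ[ℝ] V)
    (hIorth : ∀ x y : V, (inner ℝ (I x) (I y) : ℝ) = inner ℝ x y)
    (hJorth : ∀ x y : V, (inner ℝ (J x) (J y) : ℝ) = inner ℝ x y)
    (hKorth : ∀ x y : V, (inner ℝ (K x) (K y) : ℝ) = inner ℝ x y)
    (hI2 : ∀ x : V, I (I x) = -x)
    (hJ2 : ∀ x : V, J (J x) = -x)
    (hK2 : ∀ x : V, K (K x) = -x)
    (hIJK : ∀ x : V, I (J (K x)) = -x)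
    (ν : ℝ) (φ : V →ₗ[ℝ] ℝ) (ξ : V) (hξ : ∀ Y : V, (inner ℝ ξ Y : ℝ) = φ Y)
    (B : V → V → ℝ)    -- B = ∇φ
    (hB : ∀ X Y : V, B X Y = (1/2) * (-(φ X * φ Y)
      + φ (I X) * φ (I Y) + φ (J X) * φ (J Y) + φ (K X) * φ (K Y) - ν * inner ℝ X Y)) :
    ∀ η : V, (∀ Y : V, (inner ℝ η Y : ℝ) = B ξ Y) →
      η = (-(1/2) * ((inner ℝ ξ ξ : ℝ) + ν)) • ξ := by
  intro η hη
  -- φ (A ξ) = 0 for A ∈ {I, J, K}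
  have key : ∀ A : V →ₗ[ℝ] V, (∀ x y : V, (inner ℝ (A x) (A y) : ℝ) = inner ℝ x y) →
      (∀ x : V, A (A x) = -x) → φ (A ξ) = 0 := by
    intro A hA hA2
    have h1 : (inner ℝ ξ (A ξ) : ℝ) = - inner ℝ ξ (A ξ) := by
      have := hA ξ (A ξ)
      rw [hA2] at this
      rw [inner_neg_right, real_inner_comm] at this
      linarith
    have h2 : (inner ℝ ξ (A ξ) : ℝ) = 0 := by linarith
    rw [← hξ, h2]
  have hI0 := key I hIorth hI2
  have hJ0 := key J hJorth hJ2
  have hK0 := key K hKorth hK2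
  apply ext_inner_right ℝ
  intro Y
  rw [hη, hB, hI0, hJ0, hK0, real_inner_smul_left]
  have h1 : φ ξ = inner ℝ ξ ξ := (hξ ξ).symm
  have h2 : φ Y = inner ℝ ξ Y := (hξ Y).symm
  rw [h1, h2]
  ring
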